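/- Soundness of minimal explanations: Suppose (p, θ, μ) is an optimal solution of the MILP minimizing ∑ μ_{α,I} subject to constraints (2b)–(2e). Suppose μ_{α,I} = 1, and suppose there is exactly one state s with α ∈ Act(s) and I ⊆ L(s), and Act(s) and L(s) are singletons. Then p_s > 0, i.e., the state explained by the sentence (α,I) belongs to the critical subsystem. -/
import Mathlib


/-- Feasibility of the MILP (2b)–(2e) with objective variables:
`p` probabilities, `θ` binary strategy choices, `μ` binary sentence choices. -/
def MILPFeasible {S Act AP : Type*} [Fintype S] [DecidableEq AP]
    (P : S → Act → S → ℝ) (sbar : S) (T : Set S) (lam : ℝ)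
    (En : S → Finset Act) (L : S → Finset AP)
    (p : S → ℝ) (θ : S → Act → ℝ) (μ : Act → Finset AP → ℝ) : Prop :=
  (∀ s, p s ∈ Set.Icc (0 : ℝ) 1) ∧
  (∀ s α, θ s α = 0 ∨ θ s α = 1) ∧
  (∀ α I, μ α I = 0 ∨ μ α I = 1) ∧
  lam < p sbar ∧
  (∀ s ∈ T, p s = 1) ∧
  (∀ s ∉ T, ∀ α ∈ En s, p s ≤ (1 - θ s α) + ∑ s', P s α s' * p s') ∧
  (∀ s ∉ T, p s ≤ ∑ α ∈ En s, θ s α) ∧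
  (∀ s ∉ T, ∀ α ∈ En s, θ s α ≤ ∑ I ∈ (L s).powerset, μ α I)

/-- Soundness of minimal explanations: in an optimal MILP solution, if the
sentence `(α, I)` is selected (`μ α I = 1`) and there is exactly one state `s₀`
with `α` enabled and `I ⊆ L s₀`, where moreover `Act(s₀)` and `L(s₀)` are
singletons, then `p s₀ > 0`, i.e. `s₀` belongs to the critical subsystem. -/
theorem soundness_of_minimal_explanation {S Act AP : Type*}
    [Fintype S] [Fintype Act] [Fintype AP] [DecidableEq Act] [DecidableEq AP]
    (P : S → Act → S → ℝ) (sbar : S) (T : Set S) (lam : ℝ)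
    (En : S → Finset Act) (L : S → Finset AP)
    (p : S → ℝ) (θ : S → Act → ℝ) (μ : Act → Finset AP → ℝ)
    (hfeas : MILPFeasible P sbar T lam En L p θ μ)
    (hopt : ∀ p' θ' μ', MILPFeasible P sbar T lam En L p' θ' μ' →
      (∑ α : Act, ∑ I : Finset AP, μ α I) ≤ ∑ α : Act, ∑ I : Finset AP, μ' α I)
    (α : Act) (I : Finset AP) (hμ1 : μ α I = 1)
    (s0 : S) (huniq : ∀ s, (α ∈ En s ∧ I ⊆ L s) ↔ s = s0)
    (hActSingle : En s0 = {α}) (hLSingle : L s0 = I)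
    (hs0 : s0 ∉ T) :
    0 < p s0 := by
  classical
  by_contra hneg
  push_neg at hneg
  obtain ⟨hbd, hθbin, hμbin, hlam, hT, h2c, h2d, h2e⟩ := hfeas
  have hp0 : p s0 = 0 := le_antisymm hneg (hbd s0).1
  -- modified solution
  set θ' : S → Act → ℝ := fun s β => if s = s0 ∧ β = α then 0 else θ s β with hθ'
  set μ' : Act → Finset AP → ℝ := fun β J => if β = α ∧ J = I then 0 else μ β J with hμ'
  have hμ'nonneg : ∀ β J, 0 ≤ μ' β J := by
    intro β J
    simp only [hμ']
    split
    · exact le_rfl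
    · rcases hμbin β J with h | h <;> simp [h]
  have hfeas' : MILPFeasible P sbar T lam En L p θ' μ' := by
    refine ⟨hbd, ?_, ?_, hlam, hT, ?_, ?_, ?_⟩
    · intro s β; simp only [hθ']; split
      · exact Or.inl rfl
      · exact hθbin s β
    · intro β J; simp only [hμ']; split
      · exact Or.inl rfl
      · exact hμbin β J
    · -- (2c)
      intro s hsT β hβ
      by_cases hcase : s = s0 ∧ β = α
      · have h1 : θ' s β = 0 := by simp [hθ', hcase]
        rw [h1]
        have horig := h2c s hsT β hβ
        have hθle : θ s β ≤ 1 := by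
          rcases hθbin s β with h | h <;> simp [h]
        have hθge : 0 ≤ θ s β := by
          rcases hθbin s β with h | h <;> simp [h]
        have hp : p s = 0 := by rw [hcase.1]; exact hp0
        rw [hp] at horig ⊢
        linarith
      · simp only [hθ', if_neg hcase]
        exact h2c s hsT β hβ
    · -- (2d)
      intro s hsT
      by_cases hcase : s = s0
      · subst hcase
        rw [hActSingle, hp0]
        simp [hθ']
      · have : ∀ β ∈ En s, θ' s β = θ s β := by
          intro β _
          simp [hθ', hcase]
        rw [Finset.sum_congr rfl this]
        exact h2d s hsT
    · -- (2e)
      intro s hsT β hβ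
      by_cases hcase : s = s0
      · have hβα : β = α := by
          rw [hcase, hActSingle] at hβ
          exact Finset.mem_singleton.mp hβ
        have h1 : θ' s β = 0 := by simp [hθ', hcase, hβα]
        rw [h1]
        exact Finset.sum_nonneg fun J _ => hμ'nonneg β J
      · have hθeq : θ' s β = θ s β := by simp [hθ', hcase]
        rw [hθeq]
        by_cases hβα : β = α
        · subst hβα
          have hnI : ¬ I ⊆ L s := by
            intro hsub
            exact hcase ((huniq s).mp ⟨hβ, hsub⟩)
          have : ∀ J ∈ (L s).powerset, μ' β J = μ β J := by
            intro J hJ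
            rw [Finset.mem_powerset] at hJ
            have : J ≠ I := fun h => hnI (h ▸ hJ)
            simp [hμ', this]
          rw [Finset.sum_congr rfl this]
          exact h2e s hsT β hβ
        · have : ∀ J ∈ (L s).powerset, μ' β J = μ β J := by
            intro J _; simp [hμ', hβα]
          rw [Finset.sum_congr rfl this]
          exact h2e s hsT β hβ
  have hμnn : ∀ β J, 0 ≤ μ β J := by
    intro β J; rcases hμbin β J with h | h <;> simp [h]
  have hle : ∀ β J, μ' β J ≤ μ β J := by
    intro β J
    simp only [hμ']
    split
    · exact hμnn β J
    · exact le_rfl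
  have hlt : (∑ β : Act, ∑ J : Finset AP, μ' β J) < ∑ β : Act, ∑ J : Finset AP, μ β J := by
    apply Finset.sum_lt_sum
    · intro β _
      exact Finset.sum_le_sum fun J _ => hle β J
    · refine ⟨α, Finset.mem_univ α, ?_⟩
      apply Finset.sum_lt_sum
      · intro J _; exact hle α J
      · refine ⟨I, Finset.mem_univ I, ?_⟩
        simp [hμ', hμ1]
  exact absurd (hopt p θ' μ' hfeas') (not_le.mpr hlt)
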